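/- A finite simple graph G is a threshold graph if and only if G contains no induced subgraph isomorphic to the path P4 on four vertices, no induced subgraph isomorphic to 2K2 (the disjoint union of two edges), and no induced subgraph isomorphic to the cycle C4 on four vertices. -/

import Mathlib

/-- A graph is a threshold graph if adjacency is determined by vertex weights
exceeding a threshold. -/
def SimpleGraph.IsThreshold {V : Type*} (G : SimpleGraph V) : Prop :=
  ∃ (S : ℝ) (w : V → ℝ), ∀ u v : V, u ≠ v → (G.Adj u v ↔ S < w u + w v)

/-- The path graph on four vertices, with edges 0-1, 1-2, 2-3. -/
def pathP4 : SimpleGraph (Fin 4) :=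
  SimpleGraph.fromRel (fun x y => y.val = x.val + 1)

/-- The cycle graph on four vertices. -/
def cycleC4 : SimpleGraph (ZMod 4) :=
  SimpleGraph.fromRel (fun x y => y = x + 1)

/-- The disjoint union of two edges: edges 0-1 and 2-3 on four vertices. -/
def twoK2 : SimpleGraph (Fin 4) :=
  SimpleGraph.fromRel (fun x y => (x = 0 ∧ y = 1) ∨ (x = 2 ∧ y = 3))

open SimpleGraph

section ThresholdHelpers

instance : DecidableRel pathP4.Adj := fun a b =>
  decidable_of_iff _ (SimpleGraph.fromRel_adj _ a b).symm

instance : DecidableRel cycleC4.Adj := fun a b =>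
  decidable_of_iff _ (SimpleGraph.fromRel_adj _ a b).symm

instance : DecidableRel twoK2.Adj := fun a b =>
  decidable_of_iff _ (SimpleGraph.fromRel_adj _ a b).symm

variable {V : Type*} {G : SimpleGraph V}

set_option linter.unreachableTactic false
set_option linter.unusedTactic false

/-- Build an induced path `a-b-c-d` as an embedding of `pathP4`. -/
lemma embedP4 {a b c d : V} (hab : G.Adj a b) (hbc : G.Adj b c) (hcd : G.Adj c d)
    (hac : ¬ G.Adj a c) (had : ¬ G.Adj a d) (hbd : ¬ G.Adj b d)
    (nac : a ≠ c) (nad : a ≠ d) (nbd : b ≠ d) : Nonempty (pathP4 ↪g G) := by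
  refine ⟨⟨⟨![a,b,c,d], ?_⟩, ?_⟩⟩
  · intro i j h
    have nab := hab.ne; have nbc := hbc.ne; have ncd := hcd.ne
    fin_cases i <;> fin_cases j <;> simp_all <;> simp_all [eq_comm]
  · intro i j
    have sab := hab.symm; have sbc := hbc.symm; have scd := hcd.symm
    have hca : ¬ G.Adj c a := fun h => hac h.symm
    have hda : ¬ G.Adj d a := fun h => had h.symm
    have hdb : ¬ G.Adj d b := fun h => hbd h.symm
    fin_cases i <;> fin_cases j <;>
      (try simp_all [pathP4, SimpleGraph.fromRel_adj, G.irrefl]) <;> assumption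

/-- Build an induced pair of disjoint edges `a-b`, `c-d` as an embedding of `twoK2`. -/
lemma embed2K2 {a b c d : V} (hab : G.Adj a b) (hcd : G.Adj c d)
    (hac : ¬ G.Adj a c) (had : ¬ G.Adj a d) (hbc : ¬ G.Adj b c) (hbd : ¬ G.Adj b d)
    (nac : a ≠ c) (nad : a ≠ d) (nbc : b ≠ c) (nbd : b ≠ d) :
    Nonempty (twoK2 ↪g G) := by
  refine ⟨⟨⟨![a,b,c,d], ?_⟩, ?_⟩⟩
  · intro i j h
    have nab := hab.ne; have ncd := hcd.ne
    fin_cases i <;> fin_cases j <;> simp_all <;> simp_all [eq_comm]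
  · intro i j
    have sab := hab.symm; have scd := hcd.symm
    have hca : ¬ G.Adj c a := fun h => hac h.symm
    have hda : ¬ G.Adj d a := fun h => had h.symm
    have hcb : ¬ G.Adj c b := fun h => hbc h.symm
    have hdb : ¬ G.Adj d b := fun h => hbd h.symm
    fin_cases i <;> fin_cases j <;>
      (try simp_all [twoK2, SimpleGraph.fromRel_adj, G.irrefl]) <;> assumption

/-- Build an induced four-cycle `a-b-c-d-a` as an embedding of `cycleC4`. -/
lemma embedC4 {a b c d : V} (hab : G.Adj a b) (hbc : G.Adj b c) (hcd : G.Adj c d)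
    (hda : G.Adj d a) (hac : ¬ G.Adj a c) (hbd : ¬ G.Adj b d)
    (nac : a ≠ c) (nbd : b ≠ d) : Nonempty (cycleC4 ↪g G) := by
  have nab := hab.ne; have nbc := hbc.ne; have ncd := hcd.ne; have nda := hda.ne
  have nda' : a ≠ d := fun h => nda h.symm
  have sab := hab.symm; have sbc := hbc.symm; have scd := hcd.symm; have sda := hda.symm
  have hca : ¬ G.Adj c a := fun h => hac h.symm
  have hdb : ¬ G.Adj d b := fun h => hbd h.symm
  refine ⟨⟨⟨fun i => if i = 0 then a else if i = 1 then b else if i = 2 then c else d, ?_⟩, ?_⟩⟩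
  · intro i j h
    rcases (show ∀ k : ZMod 4, k = 0 ∨ k = 1 ∨ k = 2 ∨ k = 3 by decide) i with rfl | rfl | rfl | rfl <;>
      rcases (show ∀ k : ZMod 4, k = 0 ∨ k = 1 ∨ k = 2 ∨ k = 3 by decide) j with rfl | rfl | rfl | rfl <;>
      simp only [show ((1:ZMod 4)=0)=False from by decide, show ((2:ZMod 4)=0)=False from by decide,
        show ((2:ZMod 4)=1)=False from by decide, show ((3:ZMod 4)=0)=False from by decide,
        show ((3:ZMod 4)=1)=False from by decide, show ((3:ZMod 4)=2)=False from by decide,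
        eq_self_iff_true, if_true, if_false] at h ⊢ <;>
      first
        | rfl
        | exact absurd h (by assumption)
        | exact absurd h.symm (by assumption)
  · intro i j
    change G.Adj ((fun i : ZMod 4 => if i = 0 then a else if i = 1 then b else if i = 2 then c else d) i)
      ((fun i : ZMod 4 => if i = 0 then a else if i = 1 then b else if i = 2 then c else d) j) ↔ cycleC4.Adj i j
    rcases (show ∀ k : ZMod 4, k = 0 ∨ k = 1 ∨ k = 2 ∨ k = 3 by decide) i with rfl | rfl | rfl | rfl <;>
      rcases (show ∀ k : ZMod 4, k = 0 ∨ k = 1 ∨ k = 2 ∨ k = 3 by decide) j with rfl | rfl | rfl | rfl <;>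
      simp only [show ((1:ZMod 4)=0)=False from by decide, show ((2:ZMod 4)=0)=False from by decide,
        show ((2:ZMod 4)=1)=False from by decide, show ((3:ZMod 4)=0)=False from by decide,
        show ((3:ZMod 4)=1)=False from by decide, show ((3:ZMod 4)=2)=False from by decide,
        eq_self_iff_true, if_true, if_false] <;>
      first
        | exact iff_of_true (by assumption) (by decide)
        | exact iff_of_false (by assumption) (by decide)
        | exact iff_of_false G.irrefl (by decide)

/-- If `G` contains an induced subgraph with two vertex-disjoint edges whose endpoints
are suitably non-adjacent, then `G` is not threshold. -/
lemma not_threshold_of_pattern {W : Type*} {H : SimpleGraph W} (e : H ↪g G)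
    (i0 i1 i2 i3 : W) (h01 : H.Adj i0 i1) (h23 : H.Adj i2 i3)
    (h02 : ¬ H.Adj i0 i2) (h13 : ¬ H.Adj i1 i3) (n02 : i0 ≠ i2) (n13 : i1 ≠ i3) :
    ¬ G.IsThreshold := by
  rintro ⟨S, w, hw⟩
  have a01 : G.Adj (e i0) (e i1) := e.map_adj_iff.mpr h01
  have a23 : G.Adj (e i2) (e i3) := e.map_adj_iff.mpr h23
  have a02 : ¬ G.Adj (e i0) (e i2) := fun h => h02 (e.map_adj_iff.mp h)
  have a13 : ¬ G.Adj (e i1) (e i3) := fun h => h13 (e.map_adj_iff.mp h)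
  have k01 := (hw _ _ a01.ne).mp a01
  have k23 := (hw _ _ a23.ne).mp a23
  have k02 := (hw (e i0) (e i2) (fun h => n02 (e.injective h))).not.mp a02
  have k13 := (hw (e i1) (e i3) (fun h => n13 (e.injective h))).not.mp a13
  push_neg at k02 k13
  linarith

/-- In a nonempty `{P4, 2K2, C4}`-free graph there is an isolated or a dominating vertex. -/
lemma exists_isolated_or_dominating [Fintype V] [Nonempty V] (G : SimpleGraph V)
    (h4 : ¬ Nonempty (pathP4 ↪g G)) (h2 : ¬ Nonempty (twoK2 ↪g G))
    (hc : ¬ Nonempty (cycleC4 ↪g G)) :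
    ∃ v : V, (∀ u, u ≠ v → ¬ G.Adj v u) ∨ (∀ u, u ≠ v → G.Adj v u) := by
  classical
  by_contra hcon
  push_neg at hcon
  obtain ⟨v, -, hvmax⟩ := Finset.exists_max_image Finset.univ (fun x => G.degree x)
    ⟨Classical.arbitrary V, Finset.mem_univ _⟩
  -- v is not dominating: get u ≠ v with ¬ Adj v u
  obtain ⟨⟨_, _, _⟩, ⟨u, hune, hvu⟩⟩ := hcon v
  -- u is not isolated: get x ≠ u with Adj u x
  obtain ⟨⟨x, hxu, hux⟩, -⟩ := hcon u
  have hvu' : ¬ G.Adj u v := fun h => hvu h.symm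
  have hxv : x ≠ v := by rintro rfl; exact hvu' hux
  -- main argument, applied to u' ∈ B := non-neighbors of v, adjacent to y ∈ N(v)
  have main : ∀ u' y : V, u' ≠ v → ¬ G.Adj v u' → G.Adj u' y → G.Adj v y → False := by
    intro u' y hu'v hvu'' hu'y hvy
    have hu'v' : ¬ G.Adj u' v := fun h => hvu'' h.symm
    -- every neighbor z of v other than y is adjacent to y
    have hy : ∀ z, G.Adj v z → z ≠ y → G.Adj y z := by
      intro z hvz hzy
      have hu'z_ne : u' ≠ z := fun h => hvu'' (h ▸ hvz)
      by_contra hyz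
      by_cases hu'z : G.Adj u' z
      · -- C4 : u'-y-v-z-u'
        exact hc (embedC4 hu'y hvy.symm hvz hu'z.symm hu'v' (fun h => hyz h) hu'v hzy.symm)
      · -- P4 : u'-y-v-z
        exact h4 (embedP4 hu'y hvy.symm hvz hu'v' hu'z (fun h => hyz h) hu'v hu'z_ne (Ne.symm hzy))
    -- so N(y) ⊇ {u', v} ∪ (N(v) \ {y})
    have hyA : y ∈ G.neighborFinset v := (G.mem_neighborFinset v y).mpr hvy
    have hu'A : u' ∉ G.neighborFinset v := fun h => hvu'' ((G.mem_neighborFinset v u').mp h)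
    have hvA : v ∉ G.neighborFinset v := fun h => G.irrefl ((G.mem_neighborFinset v v).mp h)
    have hsub : insert u' (insert v ((G.neighborFinset v).erase y)) ⊆ G.neighborFinset y := by
      intro z hz
      rw [G.mem_neighborFinset]
      rcases Finset.mem_insert.mp hz with rfl | hz
      · exact hu'y.symm
      rcases Finset.mem_insert.mp hz with rfl | hz
      · exact hvy.symm
      · obtain ⟨hzy, hzA⟩ := Finset.mem_erase.mp hz
        exact hy z ((G.mem_neighborFinset v z).mp hzA) hzy
    have hcard : G.degree v + 1 ≤ G.degree y := by
      have h1 : (insert u' (insert v ((G.neighborFinset v).erase y))).card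
          = (G.neighborFinset v).card + 1 := by
        rw [Finset.card_insert_of_notMem, Finset.card_insert_of_notMem,
          Finset.card_erase_of_mem hyA]
        · have : 1 ≤ (G.neighborFinset v).card := Finset.card_pos.mpr ⟨y, hyA⟩
          omega
        · exact fun h => hvA (Finset.mem_of_mem_erase h)
        · intro h
          rcases Finset.mem_insert.mp h with rfl | h
          · exact hu'v rfl
          · exact hu'A (Finset.mem_of_mem_erase h)
      calc G.degree v + 1 = (insert u' (insert v ((G.neighborFinset v).erase y))).card := by
            rw [h1]; rfl
        _ ≤ (G.neighborFinset y).card := Finset.card_le_card hsub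
        _ = G.degree y := rfl
    have := hvmax y (Finset.mem_univ y)
    omega
  -- now split on whether x is a neighbor of v
  by_cases hvx : G.Adj v x
  · exact main u x hune hvu hux hvx
  · -- x ∈ B, u ∈ B adjacent: claim every neighbor y of v is adjacent to both u and x
    have hA1 : ∀ y, G.Adj v y → G.Adj y u ∧ G.Adj y x := by
      intro y hvy
      have hyu_ne : y ≠ u := fun h => hvu (h ▸ hvy)
      have hyx_ne : y ≠ x := fun h => hvx (h ▸ hvy)
      by_cases hyu : G.Adj y u
      · refine ⟨hyu, ?_⟩
        by_contra hyx
        -- P4 : x-u-y-v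
        exact h4 (embedP4 hux.symm hyu.symm hvy.symm (fun h => hyx h.symm)
          (fun h => hvx h.symm) hvu' (Ne.symm hyx_ne) hxv hune)
      · by_cases hyx : G.Adj y x
        · exfalso
          -- P4 : u-x-y-v
          exact h4 (embedP4 hux hyx.symm hvy.symm (fun h => hyu h.symm) (fun h => hvu h.symm)
            (fun h => hvx h.symm) (Ne.symm hyu_ne) hune hxv)
        · exfalso
          -- 2K2 : v-y, u-x
          exact h2 (embed2K2 hvy hux hvu hvx hyu hyx (Ne.symm hune) (Ne.symm hxv) hyu_ne hyx_ne)
    -- then N(u) ⊇ {x} ∪ N(v), contradicting maximality of deg v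
    have hxA : x ∉ G.neighborFinset v := fun h => hvx ((G.mem_neighborFinset v x).mp h)
    have hsub : insert x (G.neighborFinset v) ⊆ G.neighborFinset u := by
      intro z hz
      rw [G.mem_neighborFinset]
      rcases Finset.mem_insert.mp hz with rfl | hz
      · exact hux
      · exact ((hA1 z ((G.mem_neighborFinset v z).mp hz)).1).symm
    have hcard : G.degree v + 1 ≤ G.degree u := by
      calc G.degree v + 1 = (insert x (G.neighborFinset v)).card := by
            rw [Finset.card_insert_of_notMem hxA]; rfl
        _ ≤ (G.neighborFinset u).card := Finset.card_le_card hsub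
        _ = G.degree u := rfl
    have := hvmax u (Finset.mem_univ u)
    omega

/-- Forbidden-subgraph-free graphs are threshold, by induction on the number of vertices. -/
lemma threshold_of_free : ∀ (n : ℕ) {V : Type u} [Fintype V] (G : SimpleGraph V),
    Fintype.card V ≤ n → (¬ Nonempty (pathP4 ↪g G)) → (¬ Nonempty (twoK2 ↪g G)) →
    (¬ Nonempty (cycleC4 ↪g G)) → G.IsThreshold := by
  intro n
  induction n with
  | zero =>
    intro V _ G hcard _ _ _
    have : IsEmpty V := Fintype.card_eq_zero_iff.mp (Nat.le_zero.mp hcard)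
    exact ⟨0, fun _ => 0, fun u => this.elim u⟩
  | succ n ih =>
    intro V _ G hcard h4 h2 hc
    by_cases hne : Nonempty V
    · obtain ⟨v, hv⟩ := exists_isolated_or_dominating G h4 h2 hc
      classical
      set s : Set V := {u | u ≠ v} with hs
      have hcards : Fintype.card s ≤ n := by
        have : Fintype.card s < Fintype.card V := by
          apply Fintype.card_subtype_lt (x := v)
          simp [hs]
        omega
      have h4' : ¬ Nonempty (pathP4 ↪g G.induce s) :=
        fun ⟨f⟩ => h4 ⟨(Embedding.induce s).comp f⟩
      have h2' : ¬ Nonempty (twoK2 ↪g G.induce s) :=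
        fun ⟨f⟩ => h2 ⟨(Embedding.induce s).comp f⟩
      have hc' : ¬ Nonempty (cycleC4 ↪g G.induce s) :=
        fun ⟨f⟩ => hc ⟨(Embedding.induce s).comp f⟩
      obtain ⟨S, w, hw⟩ := ih (G.induce s) hcards h4' h2' hc'
      -- adjacency inside s
      have hadj : ∀ (a b : V) (ha : a ≠ v) (hb : b ≠ v), a ≠ b →
          (G.Adj a b ↔ S < w ⟨a, ha⟩ + w ⟨b, hb⟩) := by
        intro a b ha hb hab
        have := hw ⟨a, ha⟩ ⟨b, hb⟩ (fun h => hab (congrArg Subtype.val h))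
        simpa using this
      rcases hv with hiso | hdom
      · -- v isolated : give it very small weight
        obtain ⟨c0, hc0⟩ : ∃ c0, ∀ x : s, c0 ≤ S - w x := by
          have hfin : (Set.range fun x : s => S - w x).Finite := Set.finite_range _
          obtain ⟨c0, hc0⟩ := hfin.bddBelow
          exact ⟨c0, fun x => hc0 (Set.mem_range_self x)⟩
        refine ⟨S, fun u => if h : u = v then c0 - 1 else w ⟨u, h⟩, ?_⟩
        intro a b hab
        dsimp only
        by_cases ha : a = v <;> by_cases hb : b = v
        · exact absurd (ha.trans hb.symm) hab
        · subst ha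
          rw [dif_pos rfl, dif_neg hb]
          have h1 : ¬ G.Adj a b := hiso b hb
          have h2 : ¬ (S < c0 - 1 + w ⟨b, hb⟩) := by
            have := hc0 ⟨b, hb⟩
            push_neg
            linarith
          exact iff_of_false h1 h2
        · subst hb
          rw [dif_pos rfl, dif_neg ha]
          have h1 : ¬ G.Adj a b := fun h => hiso a ha h.symm
          have h2 : ¬ (S < w ⟨a, ha⟩ + (c0 - 1)) := by
            have := hc0 ⟨a, ha⟩
            push_neg
            linarith
          exact iff_of_false h1 h2
        · rw [dif_neg ha, dif_neg hb]
          exact hadj a b ha hb hab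
      · -- v dominating : give it very large weight
        obtain ⟨c0, hc0⟩ : ∃ c0, ∀ x : s, S - w x ≤ c0 := by
          have hfin : (Set.range fun x : s => S - w x).Finite := Set.finite_range _
          obtain ⟨c0, hc0⟩ := hfin.bddAbove
          exact ⟨c0, fun x => hc0 (Set.mem_range_self x)⟩
        refine ⟨S, fun u => if h : u = v then c0 + 1 else w ⟨u, h⟩, ?_⟩
        intro a b hab
        dsimp only
        by_cases ha : a = v <;> by_cases hb : b = v
        · exact absurd (ha.trans hb.symm) hab
        · subst ha
          rw [dif_pos rfl, dif_neg hb]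
          have h1 : G.Adj a b := hdom b hb
          have h2 : S < c0 + 1 + w ⟨b, hb⟩ := by
            have := hc0 ⟨b, hb⟩
            linarith
          exact iff_of_true h1 h2
        · subst hb
          rw [dif_pos rfl, dif_neg ha]
          have h1 : G.Adj a b := (hdom a ha).symm
          have h2 : S < w ⟨a, ha⟩ + (c0 + 1) := by
            have := hc0 ⟨a, ha⟩
            linarith
          exact iff_of_true h1 h2
        · rw [dif_neg ha, dif_neg hb]
          exact hadj a b ha hb hab
    · have : IsEmpty V := not_nonempty_iff.mp hne
      exact ⟨0, fun _ => 0, fun u => this.elim u⟩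

end ThresholdHelpers

theorem threshold_iff_forbidden_subgraphs {V : Type*} [Fintype V] (G : SimpleGraph V) :
    G.IsThreshold ↔
      (¬ Nonempty (pathP4 ↪g G)) ∧ (¬ Nonempty (twoK2 ↪g G)) ∧
        (¬ Nonempty (cycleC4 ↪g G)) := by
  constructor
  · intro hT
    refine ⟨fun ⟨e⟩ => not_threshold_of_pattern e 0 1 2 3 (by decide) (by decide)
        (by decide) (by decide) (by decide) (by decide) hT,
      fun ⟨e⟩ => not_threshold_of_pattern e 0 1 2 3 (by decide) (by decide)
        (by decide) (by decide) (by decide) (by decide) hT,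
      fun ⟨e⟩ => not_threshold_of_pattern e 0 1 2 3 (by decide) (by decide)
        (by decide) (by decide) (by decide) (by decide) hT⟩
  · rintro ⟨h4, h2, hc⟩
    exact threshold_of_free (Fintype.card V) G le_rfl h4 h2 hc
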